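/- Let n ≡ 2 (mod 4) with n > 2. If there exists an n×n ±1 matrix M with M·M^T = diag(L, L), L = (n-2)I_{n/2} + 2J_{n/2} (so that det M attains the Ehlich–Wojtas bound), then 2n - 2 is a sum of two integer squares. -/

import Mathlib

open Matrix

theorem stmt_17 (m : ℕ) (hn : (2 * m) % 4 = 2) (hn2 : 2 * m > 2)
    (M : Matrix (Fin m ⊕ Fin m) (Fin m ⊕ Fin m) ℝ)
    (hpm : ∀ i j, M i j = 1 ∨ M i j = -1)
    (L : Matrix (Fin m) (Fin m) ℝ)
    (hL : L = ((2 * m : ℝ) - 2) • (1 : Matrix (Fin m) (Fin m) ℝ)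
            + (2 : ℝ) • Matrix.of (fun _ _ => (1 : ℝ)))
    (hgram : M * Mᵀ = Matrix.fromBlocks L 0 0 L) :
    ∃ x y : ℤ, 2 * (2 * (m : ℤ)) - 2 = x ^ 2 + y ^ 2 := by
  classical
  have hm2 : 2 ≤ m := by omega
  have hmR : (2:ℝ) ≤ (m:ℝ) := by exact_mod_cast hm2
  set J : Matrix (Fin m) (Fin m) ℝ := Matrix.of (fun _ _ => (1:ℝ)) with hJ
  have hJJ : J * J = (m:ℝ) • J := by
    ext i j
    simp [hJ, Matrix.mul_apply, Finset.sum_const, Finset.card_univ]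
  set a : ℝ := (2*(m:ℝ)) - 2 with ha
  set b : ℝ := (4*(m:ℝ)) - 2 with hb
  set c : ℝ := (2*(m:ℝ)) - 1 with hc
  have ha0 : a ≠ 0 := by rw [ha]; nlinarith
  have hc0 : c ≠ 0 := by rw [hc]; nlinarith
  have hL' : L = a • (1 : Matrix (Fin m) (Fin m) ℝ) + (2:ℝ) • J := hL
  have hprod : ∀ p q r s : ℝ,
      (p • (1 : Matrix (Fin m) (Fin m) ℝ) + q • J) * (r • 1 + s • J)
        = (p*r) • (1 : Matrix (Fin m) (Fin m) ℝ) + (p*s + q*r + q*s*(m:ℝ)) • J := by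
    intro p q r s
    rw [add_mul, mul_add, mul_add, smul_mul_smul_comm, smul_mul_smul_comm,
      smul_mul_smul_comm, smul_mul_smul_comm, one_mul, mul_one, one_mul, hJJ,
      smul_smul]
    module
  set Li : Matrix (Fin m) (Fin m) ℝ := a⁻¹ • 1 + (-(a⁻¹*c⁻¹)) • J with hLi
  have hLLi : L * Li = 1 := by
    rw [hL', hLi, hprod]
    have h1 : a * a⁻¹ = 1 := mul_inv_cancel₀ ha0
    have h2 : a * -(a⁻¹ * c⁻¹) + 2 * a⁻¹ + 2 * -(a⁻¹ * c⁻¹) * (m:ℝ) = 0 := by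
      field_simp
      rw [ha, hc]; ring
    rw [h1, h2]
    module
  have hLiL : Li * L = 1 := by
    rw [hL', hLi, hprod]
    have h1 : a⁻¹ * a = 1 := inv_mul_cancel₀ ha0
    have h2 : a⁻¹ * 2 + -(a⁻¹ * c⁻¹) * a + -(a⁻¹ * c⁻¹) * 2 * (m:ℝ) = 0 := by
      field_simp
      rw [ha, hc]; ring
    rw [h1, h2]
    module
  have hLL : L * L = ((6*(m:ℝ))-4) • L - (a*b) • 1 := by
    rw [hL', hprod]
    match_scalars
    · rw [ha, hb]; ring
    · rw [ha]; ring
  set G : Matrix (Fin m ⊕ Fin m) (Fin m ⊕ Fin m) ℝ := Matrix.fromBlocks L 0 0 L with hG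
  have hGGi : G * (Matrix.fromBlocks Li 0 0 Li) = 1 := by
    rw [hG, Matrix.fromBlocks_multiply]
    simp [hLLi, Matrix.fromBlocks_one]
  have hGiG : (Matrix.fromBlocks Li 0 0 Li) * G = 1 := by
    rw [hG, Matrix.fromBlocks_multiply]
    simp [hLiL, Matrix.fromBlocks_one]
  set Mi : Matrix (Fin m ⊕ Fin m) (Fin m ⊕ Fin m) ℝ := Mᵀ * Matrix.fromBlocks Li 0 0 Li with hMi
  have hMMi : M * Mi = 1 := by
    rw [hMi, ← Matrix.mul_assoc, hgram]; exact hGGi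
  have hMiM : Mi * M = 1 := mul_eq_one_comm.mp hMMi
  have hGG : G * G = ((6*(m:ℝ))-4) • G - (a*b) • 1 := by
    have hrhs : ((6*(m:ℝ))-4) • G - (a*b) • (1 : Matrix (Fin m ⊕ Fin m) (Fin m ⊕ Fin m) ℝ)
        = Matrix.fromBlocks (((6*(m:ℝ))-4) • L - (a*b) • 1) 0 0 (((6*(m:ℝ))-4) • L - (a*b) • 1) := by
      rw [hG, ← Matrix.fromBlocks_one, Matrix.fromBlocks_smul, Matrix.fromBlocks_smul]
      ext (i|i) (j|j) <;> simp
    rw [hrhs, hG, Matrix.fromBlocks_multiply]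
    simp [hLL]
  set N : Matrix (Fin m ⊕ Fin m) (Fin m ⊕ Fin m) ℝ := Mᵀ * M with hN
  have hMiG : Mi * G = Mᵀ := by
    rw [hMi, Matrix.mul_assoc, hGiG, Matrix.mul_one]
  have hNGM : N = Mi * G * M := by rw [hMiG, hN]
  have hNN : N * N = ((6*(m:ℝ))-4) • N - (a*b) • 1 := by
    have h1 : N * N = Mi * (G * G) * M := by
      rw [hN, hMi]
      simp only [Matrix.mul_assoc]
      rw [← Matrix.mul_assoc _ G (G * M), hGiG, Matrix.one_mul, ← hgram,
        Matrix.mul_assoc M Mᵀ M]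
    rw [h1, hGG, Matrix.mul_sub, Matrix.sub_mul, Matrix.mul_smul, Matrix.smul_mul,
      ← hNGM, Matrix.mul_smul, Matrix.mul_one, Matrix.smul_mul, hMiM]
  set W : Matrix (Fin m ⊕ Fin m) (Fin m ⊕ Fin m) ℝ := N - a • 1 with hW
  have hWW : W * W = (2*(m:ℝ)) • W := by
    rw [hW, Matrix.sub_mul, Matrix.mul_sub, Matrix.mul_sub, hNN,
      Matrix.mul_smul, Matrix.mul_one, Matrix.smul_mul, Matrix.one_mul,
      Matrix.smul_mul, Matrix.mul_smul, Matrix.mul_one]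
    match_scalars
    all_goals (first | ring | (rw [ha, hb]; ring) | (rw [ha]; ring) | (rw [hb]; ring))
  have hGM : G * M = M * N := by rw [← hgram, Matrix.mul_assoc, hN]
  set i₀ : Fin m ⊕ Fin m := Sum.inl ⟨0, by omega⟩ with hi₀
  have hWsymT : Wᵀ = W := by
    rw [hW, Matrix.transpose_sub, Matrix.transpose_smul, Matrix.transpose_one, hN,
      Matrix.transpose_mul, Matrix.transpose_transpose]
  have hWsym : ∀ j k, W j k = W k j := by
    intro j k
    have h := congrFun (congrFun hWsymT k) j
    simpa using h
  set χ : (Fin m ⊕ Fin m) → ℝ := fun k => W k i₀ with hχ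
  have hWχ : ∀ j, ∑ k, W j k * χ k = (2*(m:ℝ)) * χ j := by
    intro j
    have h := congrFun (congrFun hWW j) i₀
    simpa [Matrix.mul_apply, Matrix.smul_apply, smul_eq_mul, hχ] using h
  have hNχ : N.mulVec χ = b • χ := by
    have hNW : N = W + a • 1 := by rw [hW, sub_add_cancel]
    ext j
    rw [hNW, Matrix.add_mulVec, Matrix.smul_mulVec, Matrix.one_mulVec]
    have h2 : (W.mulVec χ) j = ∑ k, W j k * χ k := by simp [Matrix.mulVec, dotProduct]
    simp only [Pi.add_apply, Pi.smul_apply, smul_eq_mul]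
    rw [h2, hWχ j, ha, hb]
    ring
  set u : (Fin m ⊕ Fin m) → ℝ := M.mulVec χ with hu
  have hGu : G.mulVec u = b • u := by
    rw [hu, Matrix.mulVec_mulVec, hGM, ← Matrix.mulVec_mulVec, hNχ, Matrix.mulVec_smul]
  have hba : b - a = 2*(m:ℝ) := by rw [ha, hb]; ring
  have h2m0 : (2*(m:ℝ)) ≠ 0 := by positivity
  have hblock : ∀ (v : Fin m → ℝ), (L.mulVec v = fun i => b * v i) → ∀ i j : Fin m, v i = v j := by
    intro v hv i j
    have hK : ∀ i : Fin m, a * v i + 2 * (∑ k, v k) = b * v i := by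
      intro i
      have h := congrFun hv i
      rw [hL', Matrix.add_mulVec, Matrix.smul_mulVec, Matrix.one_mulVec,
        Matrix.smul_mulVec] at h
      have hJv : (J.mulVec v) i = ∑ k, v k := by simp [hJ, Matrix.mulVec, dotProduct]
      simp only [Pi.add_apply, Pi.smul_apply, smul_eq_mul] at h
      rw [hJv] at h
      linarith [h]
    have h3 : (b - a) * (v i - v j) = 0 := by linear_combination (hK j) - (hK i)
    have h4 : v i - v j = 0 := by
      rcases mul_eq_zero.mp h3 with h|h
      · rw [hba] at h; exact absurd h h2m0
      · exact h
    linarith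
  have hul : ∀ i j : Fin m, u (Sum.inl i) = u (Sum.inl j) := by
    refine hblock (fun i => u (Sum.inl i)) ?_
    ext i
    have h := congrFun hGu (Sum.inl i)
    rw [hG, Matrix.fromBlocks_mulVec] at h
    simpa [Matrix.zero_mulVec, Function.comp_def] using h
  have hur : ∀ i j : Fin m, u (Sum.inr i) = u (Sum.inr j) := by
    refine hblock (fun i => u (Sum.inr i)) ?_
    ext i
    have h := congrFun hGu (Sum.inr i)
    rw [hG, Matrix.fromBlocks_mulVec] at h
    simpa [Matrix.zero_mulVec, Function.comp_def] using h
  have hudot : u ⬝ᵥ u = b * (χ ⬝ᵥ χ) := by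
    calc u ⬝ᵥ u = (u ᵥ* M) ⬝ᵥ χ := Matrix.dotProduct_mulVec u M χ
      _ = (Mᵀ *ᵥ u) ⬝ᵥ χ := by rw [Matrix.mulVec_transpose]
      _ = ((Mᵀ * M) *ᵥ χ) ⬝ᵥ χ := by rw [hu, Matrix.mulVec_mulVec]
      _ = (b • χ) ⬝ᵥ χ := by rw [← hN, hNχ]
      _ = b * (χ ⬝ᵥ χ) := by rw [smul_dotProduct, smul_eq_mul]
  have hdiag : N i₀ i₀ = 2*(m:ℝ) := by
    have h1 : ∀ i, M i i₀ * M i i₀ = 1 := by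
      intro i; rcases hpm i i₀ with h|h <;> rw [h] <;> norm_num
    rw [hN]
    rw [show (Mᵀ * M) i₀ i₀ = ∑ i, M i i₀ * M i i₀ by
      simp [Matrix.mul_apply, Matrix.transpose_apply]]
    simp [h1, Finset.sum_const, Finset.card_univ]
    push_cast
    ring
  have hWdiag : W i₀ i₀ = 2 := by
    rw [hW]
    simp only [Matrix.sub_apply, Matrix.smul_apply, Matrix.one_apply_eq, smul_eq_mul,
      mul_one, hdiag, ha]
    ring
  have hχχ : χ ⬝ᵥ χ = 4*(m:ℝ) := by
    have h1 : ∀ k, χ k * χ k = W i₀ k * W k i₀ := by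
      intro k
      show W k i₀ * W k i₀ = W i₀ k * W k i₀
      rw [hWsym k i₀]
    calc χ ⬝ᵥ χ = ∑ k, W i₀ k * W k i₀ := Finset.sum_congr rfl fun k _ => h1 k
      _ = (W * W) i₀ i₀ := (Matrix.mul_apply).symm
      _ = (2*(m:ℝ)) * W i₀ i₀ := by rw [hWW]; simp
      _ = 4*(m:ℝ) := by rw [hWdiag]; ring
  set j₀ : Fin m ⊕ Fin m := Sum.inr ⟨0, by omega⟩ with hj₀
  have hsl : ∑ i : Fin m, u (Sum.inl i) * u (Sum.inl i) = (m:ℝ) * (u i₀ * u i₀) := by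
    have h1 : ∀ i : Fin m, u (Sum.inl i) * u (Sum.inl i) = u i₀ * u i₀ := by
      intro i; rw [hi₀, hul i ⟨0, by omega⟩]
    rw [Finset.sum_congr rfl fun i _ => h1 i, Finset.sum_const, Finset.card_univ,
      Fintype.card_fin, nsmul_eq_mul]
  have hsr : ∑ i : Fin m, u (Sum.inr i) * u (Sum.inr i) = (m:ℝ) * (u j₀ * u j₀) := by
    have h1 : ∀ i : Fin m, u (Sum.inr i) * u (Sum.inr i) = u j₀ * u j₀ := by
      intro i; rw [hj₀, hur i ⟨0, by omega⟩]
    rw [Finset.sum_congr rfl fun i _ => h1 i, Finset.sum_const, Finset.card_univ,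
      Fintype.card_fin, nsmul_eq_mul]
  have hkey : u i₀ * u i₀ + u j₀ * u j₀ = 4 * b := by
    have h1 : u ⬝ᵥ u = ∑ i : Fin m, u (Sum.inl i) * u (Sum.inl i)
        + ∑ i : Fin m, u (Sum.inr i) * u (Sum.inr i) := Fintype.sum_sum_type _
    rw [hsl, hsr] at h1
    rw [hudot, hχχ] at h1
    have hm0 : (m:ℝ) ≠ 0 := by positivity
    have h2 : (m:ℝ) * (u i₀ * u i₀ + u j₀ * u j₀) = (m:ℝ) * (4 * b) := by linarith
    exact mul_left_cancel₀ hm0 h2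
  have hMint : ∀ i k, ∃ qq : ℤ, M i k = (qq:ℝ) := by
    intro i k; rcases hpm i k with h|h
    · exact ⟨1, by rw [h]; norm_num⟩
    · exact ⟨-1, by rw [h]; push_cast; ring⟩
  choose q hq using hMint
  have hNeven : ∀ j k, ∃ t : ℤ, N j k = 2*(t:ℝ) := by
    intro j k
    have hterm : ∀ i, ∃ d : ℤ, M i j * M i k = 2*(d:ℝ) - 1 := by
      intro i
      rcases hpm i j with h1|h1 <;> rcases hpm i k with h2|h2
      · exact ⟨1, by rw [h1, h2]; norm_num⟩
      · exact ⟨0, by rw [h1, h2]; norm_num⟩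
      · exact ⟨0, by rw [h1, h2]; norm_num⟩
      · exact ⟨1, by rw [h1, h2]; norm_num⟩
    choose d hd using hterm
    refine ⟨(∑ i, d i) - m, ?_⟩
    have h1 : N j k = ∑ i, M i j * M i k := by
      rw [hN]; simp [Matrix.mul_apply, Matrix.transpose_apply]
    have h2 : ∑ i, M i j * M i k = ∑ i, (2*((d i :ℤ):ℝ) - 1) :=
      Finset.sum_congr rfl fun i _ => hd i
    rw [h1, h2, Finset.sum_sub_distrib, Finset.sum_const, Finset.card_univ]
    push_cast [Fintype.card_sum, Fintype.card_fin]
    rw [← Finset.mul_sum]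
    ring
  have hχint : ∀ k, ∃ t : ℤ, χ k = 2*(t:ℝ) := by
    intro k
    obtain ⟨t, ht⟩ := hNeven k i₀
    by_cases hk : k = i₀
    · refine ⟨t - ((m:ℤ) - 1), ?_⟩
      have h1 : χ k = N k i₀ - a := by
        show W k i₀ = N k i₀ - a
        rw [hW]; simp [Matrix.sub_apply, Matrix.smul_apply, hk, Matrix.one_apply_eq]
      rw [h1, ht, ha]; push_cast; ring
    · refine ⟨t, ?_⟩
      have h1 : χ k = N k i₀ := by
        show W k i₀ = N k i₀
        rw [hW]; simp [Matrix.sub_apply, Matrix.smul_apply, Matrix.one_apply_ne hk]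
      rw [h1, ht]
  choose z hz using hχint
  have huint : ∀ i, u i = 2*((∑ k, q i k * z k : ℤ):ℝ) := by
    intro i
    have h1 : u i = ∑ k, M i k * χ k := by rw [hu]; simp [Matrix.mulVec, dotProduct]
    have h2 : ∑ k, M i k * χ k = ∑ k, ((q i k :ℤ):ℝ) * (2*((z k :ℤ):ℝ)) :=
      Finset.sum_congr rfl fun k _ => by rw [hq i k, hz k]
    rw [h1, h2]
    push_cast
    rw [Finset.mul_sum]
    exact Finset.sum_congr rfl fun k _ => by ring
  have hA := huint i₀
  have hB := huint j₀
  refine ⟨∑ k, q i₀ k * z k, ∑ k, q j₀ k * z k, ?_⟩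
  set A : ℤ := ∑ k, q i₀ k * z k with hAdef
  set B : ℤ := ∑ k, q j₀ k * z k with hBdef
  have hfin : (2*(A:ℝ)) * (2*(A:ℝ)) + (2*(B:ℝ)) * (2*(B:ℝ)) = 4 * b := by
    rw [← hA, ← hB]; exact hkey
  have hfin2 : (A:ℝ)^2 + (B:ℝ)^2 = 4*(m:ℝ) - 2 := by rw [hb] at hfin; linear_combination hfin / 4
  have hgoal : ((2 * (2 * (m:ℤ)) - 2 : ℤ):ℝ) = ((A^2 + B^2 : ℤ):ℝ) := by
    push_cast; linarith
  exact_mod_cast hgoal
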